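/- The function x : [0,T] → ℝ² defined by x(t) = M(T−t)·M(T)⁻¹·[1,0]ᵀ for t ∈ [0,T) and x(T) = 0, where M(τ) is the 2×2 matrix with rows (τ³ sin(1/τ), τ³ cos(1/τ)) and (τ² sin(1/τ) + τ cos(1/τ), τ² cos(1/τ) − τ sin(1/τ)), is continuous at T but does not have bounded variation on [0,T]. -/

import Mathlib

open Set MeasureTheory Filter Matrix Real Topology

noncomputable def M (τ : ℝ) : Matrix (Fin 2) (Fin 2) ℝ :=
  !![τ^3 * Real.sin (1/τ), τ^3 * Real.cos (1/τ);
     τ^2 * Real.sin (1/τ) + τ * Real.cos (1/τ), τ^2 * Real.cos (1/τ) - τ * Real.sin (1/τ)]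

lemma unbdd_var {E : Type*} [PseudoMetricSpace E] (f : ℝ → E) (s : Set ℝ)
    (t : ℕ → ℝ) (ht : Monotone t) (hts : ∀ k, t k ∈ s)
    (ρ : ℝ) (hρ : 0 < ρ)
    (hg : ∀ k : ℕ, ρ / (k + 1) ≤ dist (f (t (k + 1))) (f (t k))) :
    ¬ BoundedVariationOn f s := by
  intro h
  have key : ∀ n : ℕ, ∑ i ∈ Finset.range n, ρ / ((i : ℝ) + 1)
      ≤ (eVariationOn f s).toReal := by
    intro n
    have h1 : ∑ i ∈ Finset.range n, edist (f (t (i+1))) (f (t i)) ≤ eVariationOn f s :=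
      eVariationOn.sum_le (f := f) (n := n) ht hts
    have h2 : ENNReal.ofReal (∑ i ∈ Finset.range n, ρ / ((i : ℝ)+1)) ≤ eVariationOn f s := by
      rw [ENNReal.ofReal_sum_of_nonneg (fun i _ => by positivity)]
      refine le_trans (Finset.sum_le_sum fun i _ => ?_) h1
      rw [edist_dist]
      exact ENNReal.ofReal_le_ofReal (hg i)
    have h3 := ENNReal.toReal_mono h h2
    rwa [ENNReal.toReal_ofReal (Finset.sum_nonneg fun i _ => by positivity)] at h3
  have hdiv : Tendsto (fun n => ∑ i ∈ Finset.range n, ρ / ((i : ℝ)+1)) atTop atTop := by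
    have h2 : Tendsto (fun n => ρ * ∑ i ∈ Finset.range n, 1 / ((i:ℝ)+1)) atTop atTop :=
      Tendsto.const_mul_atTop hρ Real.tendsto_sum_range_one_div_nat_succ_atTop
    convert h2 using 2 with n
    rw [Finset.mul_sum]
    exact Finset.sum_congr rfl fun i _ => by ring
  obtain ⟨n, hn⟩ := (hdiv.eventually_gt_atTop ((eVariationOn f s).toReal)).exists
  exact absurd (key n) (not_le.mpr hn)

set_option maxHeartbeats 1600000 in
theorem stmt_4 (T : ℝ) (hT : 0 < T)
    (x : ℝ → Fin 2 → ℝ)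
    (hx : ∀ t, t < T → x t = (M (T - t) * (M T)⁻¹) *ᵥ ![1, 0])
    (hxT : ∀ t, T ≤ t → x t = 0) :
    ContinuousWithinAt x (Set.Icc 0 T) T ∧ ¬ BoundedVariationOn x (Set.Icc 0 T) := by
  obtain ⟨c, hc⟩ : ∃ c : Fin 2 → ℝ, c = (M T)⁻¹ *ᵥ ![1, 0] := ⟨_, rfl⟩
  have hdet : (M T).det = -T^4 := by
    simp only [M, Matrix.det_fin_two_of]
    linear_combination (-T^4) * Real.sin_sq_add_cos_sq (1/T)
  have hunit : IsUnit (M T).det := by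
    rw [hdet, isUnit_iff_ne_zero]
    have : (0:ℝ) < T^4 := by positivity
    linarith
  have hMc : M T *ᵥ c = ![1, 0] := by
    rw [hc, Matrix.mulVec_mulVec, Matrix.mul_nonsing_inv _ hunit, Matrix.one_mulVec]
  have hcne : ¬ (c 0 = 0 ∧ c 1 = 0) := by
    rintro ⟨h0, h1⟩
    have := congrFun hMc 0
    simp [Matrix.mulVec, dotProduct, Fin.sum_univ_two, M, h0, h1] at this
  have hx0 : ∀ t, t < T → x t 0
      = (T-t)^3 * (Real.sin (1/(T-t)) * c 0 + Real.cos (1/(T-t)) * c 1) := by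
    intro t ht
    rw [hx t ht, ← Matrix.mulVec_mulVec, ← hc]
    simp [M, Matrix.mulVec, dotProduct, Fin.sum_univ_two]
    ring
  have hx1 : ∀ t, t < T → x t 1
      = (T-t)^2 * (Real.sin (1/(T-t)) * c 0 + Real.cos (1/(T-t)) * c 1)
        + (T-t) * (Real.cos (1/(T-t)) * c 0 - Real.sin (1/(T-t)) * c 1) := by
    intro t ht
    rw [hx t ht, ← Matrix.mulVec_mulVec, ← hc]
    simp [M, Matrix.mulVec, dotProduct, Fin.sum_univ_two]
    ring
  constructor
  · -- Continuity at T
    have hC0 : (0:ℝ) ≤ 2 * (|c 0| + |c 1|) := by positivity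
    unfold ContinuousWithinAt
    rw [hxT T le_rfl, tendsto_pi_nhds]
    intro i
    simp only [Pi.zero_apply]
    apply squeeze_zero_norm' (a := fun t => (2 * (|c 0| + |c 1|)) * |T - t|)
    · have h1 : ∀ᶠ t in 𝓝[Set.Icc 0 T] T, T - 1 < t :=
        eventually_nhdsWithin_of_eventually_nhds (eventually_gt_nhds (by linarith))
      filter_upwards [h1, self_mem_nhdsWithin] with t h1 h2
      rcases lt_or_ge t T with htT | htT
      · obtain ⟨τ, hτ⟩ : ∃ τ', τ' = T - t := ⟨_, rfl⟩
        have hτ0 : 0 < τ := by rw [hτ]; linarith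
        have hτ1 : τ ≤ 1 := by rw [hτ]; linarith
        have hs1 : |Real.sin (1/τ)| ≤ 1 := Real.abs_sin_le_one _
        have hc1 : |Real.cos (1/τ)| ≤ 1 := Real.abs_cos_le_one _
        have habs : ∀ s co : ℝ, |s| ≤ 1 → |co| ≤ 1 → |s * c 0 + co * c 1| ≤ |c 0| + |c 1| := by
          intro s co hs hco
          calc |s * c 0 + co * c 1| ≤ |s * c 0| + |co * c 1| := abs_add_le _ _
            _ = |s| * |c 0| + |co| * |c 1| := by rw [abs_mul, abs_mul]
            _ ≤ 1 * |c 0| + 1 * |c 1| := by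
                nlinarith [abs_nonneg (c 0), abs_nonneg (c 1), abs_nonneg s, abs_nonneg co]
            _ = |c 0| + |c 1| := by ring
        have hTt : |T - t| = τ := by rw [← hτ]; exact abs_of_pos hτ0
        rw [Real.norm_eq_abs, hTt]
        fin_cases i
        · show |x t 0| ≤ 2 * (|c 0| + |c 1|) * τ
          rw [hx0 t htT, ← hτ, abs_mul, abs_pow, abs_of_pos hτ0]
          have h3 := habs _ _ hs1 hc1
          have hτ3 : τ^3 ≤ τ := by
            nlinarith [mul_nonneg (mul_nonneg hτ0.le hτ0.le) (sub_nonneg.mpr hτ1),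
              mul_nonneg hτ0.le (sub_nonneg.mpr hτ1)]
          have e1 : τ^3 * |Real.sin (1/τ) * c 0 + Real.cos (1/τ) * c 1|
              ≤ τ * |Real.sin (1/τ) * c 0 + Real.cos (1/τ) * c 1| :=
            mul_le_mul_of_nonneg_right hτ3 (abs_nonneg _)
          have e2 : τ * |Real.sin (1/τ) * c 0 + Real.cos (1/τ) * c 1| ≤ τ * (|c 0| + |c 1|) :=
            mul_le_mul_of_nonneg_left h3 hτ0.le
          have e3 : 0 ≤ τ * (|c 0| + |c 1|) :=
            mul_nonneg hτ0.le (add_nonneg (abs_nonneg _) (abs_nonneg _))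
          nlinarith [abs_nonneg (c 0), abs_nonneg (c 1)]
        · show |x t 1| ≤ 2 * (|c 0| + |c 1|) * τ
          rw [hx1 t htT, ← hτ]
          have h3 := habs _ _ hs1 hc1
          have h4 : |Real.cos (1/τ) * c 0 - Real.sin (1/τ) * c 1| ≤ |c 0| + |c 1| := by
            have := habs (Real.cos (1/τ)) (-Real.sin (1/τ)) hc1 (by rwa [abs_neg])
            rw [neg_mul] at this
            rwa [← sub_eq_add_neg] at this
          calc |τ^2 * (Real.sin (1/τ) * c 0 + Real.cos (1/τ) * c 1)
                + τ * (Real.cos (1/τ) * c 0 - Real.sin (1/τ) * c 1)|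
              ≤ |τ^2 * (Real.sin (1/τ) * c 0 + Real.cos (1/τ) * c 1)|
                + |τ * (Real.cos (1/τ) * c 0 - Real.sin (1/τ) * c 1)| := abs_add_le _ _
            _ = τ^2 * |Real.sin (1/τ) * c 0 + Real.cos (1/τ) * c 1|
                + τ * |Real.cos (1/τ) * c 0 - Real.sin (1/τ) * c 1| := by
                rw [abs_mul, abs_mul, abs_pow, abs_of_pos hτ0]
            _ ≤ τ * (|c 0| + |c 1|) + τ * (|c 0| + |c 1|) := by
                have hτ2 : τ^2 ≤ τ := by nlinarith
                have e1 : τ^2 * |Real.sin (1/τ) * c 0 + Real.cos (1/τ) * c 1|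
                    ≤ τ * |Real.sin (1/τ) * c 0 + Real.cos (1/τ) * c 1| :=
                  mul_le_mul_of_nonneg_right hτ2 (abs_nonneg _)
                have e2 : τ * |Real.sin (1/τ) * c 0 + Real.cos (1/τ) * c 1| ≤ τ * (|c 0| + |c 1|) :=
                  mul_le_mul_of_nonneg_left h3 hτ0.le
                have e4 : τ * |Real.cos (1/τ) * c 0 - Real.sin (1/τ) * c 1| ≤ τ * (|c 0| + |c 1|) :=
                  mul_le_mul_of_nonneg_left h4 hτ0.le
                linarith
            _ = 2 * (|c 0| + |c 1|) * τ := by ring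
      · have : t = T := le_antisymm h2.2 htT
        rw [this, hxT T le_rfl]
        simp
    · have : Tendsto (fun t : ℝ => (2 * (|c 0| + |c 1|)) * |T - t|) (𝓝 T) (𝓝 0) := by
        have hcont : Continuous (fun t : ℝ => (2 * (|c 0| + |c 1|)) * |T - t|) := by
          continuity
        have := hcont.tendsto T
        simpa using this
      exact this.mono_left nhdsWithin_le_nhds
  · -- Unbounded variation
    clear hx hxT hx0 hMc hunit hdet hc
    obtain ⟨d, e, θ, hd, hθ0, hθ, hval⟩ :
        ∃ d e θ : ℝ, d ≠ 0 ∧ 0 ≤ θ ∧ θ ≤ π/2 ∧ ∀ n : ℕ, ∀ t : ℝ, t < T →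
          T - t = 1/((n:ℝ)*π+θ) → x t 1 = (-1)^n * (d * (T-t) + e * (T-t)^2) := by
      have hcosnpi : ∀ n : ℕ, Real.cos ((n:ℝ)*π) = (-1)^n := by
        intro n
        simpa using Real.cos_nat_mul_pi_sub 0 n
      by_cases h0 : c 0 = 0
      · have h1 : c 1 ≠ 0 := fun h1 => hcne ⟨h0, h1⟩
        refine ⟨-(c 1), c 0, π/2, neg_ne_zero.mpr h1, by positivity, le_rfl, ?_⟩
        intro n t ht htau
        rw [hx1 t ht, htau, one_div_one_div, Real.sin_add_pi_div_two,
          Real.cos_add_pi_div_two, Real.sin_nat_mul_pi, hcosnpi, h0]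
        ring
      · refine ⟨c 0, c 1, 0, h0, le_rfl, by positivity, ?_⟩
        intro n t ht htau
        rw [hx1 t ht, htau, add_zero, one_div_one_div, Real.sin_nat_mul_pi, hcosnpi]
        ring
    clear hx1 hcne
    obtain ⟨K, hK⟩ := exists_nat_ge (max (1/T) (2*|e|/|d|))
    have hπ1 : (1:ℝ) ≤ π := by linarith [Real.pi_gt_three]
    have hπ0 : (0:ℝ) < π := by linarith
    have hd' : 0 < |d| := abs_pos.mpr hd
    have hK1 : 1/T ≤ K := le_trans (le_max_left _ _) hK
    have hK2 : 2*|e|/|d| ≤ K := le_trans (le_max_right _ _) hK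
    -- the sequence σ of angles
    obtain ⟨σ, hσdef⟩ : ∃ σ : ℕ → ℝ, σ = fun k : ℕ => ((K:ℝ)+1+(k:ℝ))*π + θ := ⟨_, rfl⟩
    have hσK : ∀ k : ℕ, (K:ℝ) ≤ σ k := by
      intro k
      have h1 : (0:ℝ) ≤ k := Nat.cast_nonneg k
      have : ((K:ℝ)+1+k) * 1 ≤ ((K:ℝ)+1+k) * π := by
        apply mul_le_mul_of_nonneg_left hπ1
        positivity
      simp only [hσdef]
      nlinarith [Nat.cast_nonneg (α := ℝ) K]
    have hσpos : ∀ k : ℕ, 0 < σ k := by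
      intro k
      simp only [hσdef]
      have h1 : (0:ℝ) ≤ k := Nat.cast_nonneg k
      nlinarith [Nat.cast_nonneg (α := ℝ) K]
    have hσmono : ∀ k : ℕ, σ k < σ (k+1) := by
      intro k
      simp only [hσdef]
      push_cast
      nlinarith
    have hσinvT : ∀ k : ℕ, 1 / σ k ≤ T := by
      intro k
      have h1 : 1/T ≤ σ k := le_trans hK1 (hσK k)
      have h2 : (0:ℝ) < 1/T := by positivity
      have := one_div_le_one_div_of_le h2 h1
      rwa [one_div_one_div] at this
    -- the partition points
    obtain ⟨t, htdef⟩ : ∃ t : ℕ → ℝ, t = fun k => T - 1 / σ k := ⟨_, rfl⟩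
    have htltT : ∀ k, t k < T := by
      intro k
      have := one_div_pos.mpr (hσpos k)
      simp only [htdef]
      linarith
    have hTt : ∀ k, T - t k = 1 / σ k := by intro k; simp only [htdef]; ring
    have ht : Monotone t := by
      apply monotone_nat_of_le_succ
      intro k
      simp only [htdef]
      have := one_div_le_one_div_of_le (hσpos k) (hσmono k).le
      linarith
    have hts : ∀ k, t k ∈ Set.Icc 0 T := by
      intro k
      refine ⟨?_, (htltT k).le⟩
      simp only [htdef]
      linarith [hσinvT k]
    -- the values
    have hxv : ∀ k : ℕ, x (t k) 1 = (-1)^(K+1+k) * (d * (1/σ k) + e * (1/σ k)^2) := by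
      intro k
      have hcast : ((K+1+k : ℕ):ℝ)*π + θ = σ k := by simp only [hσdef]; push_cast; ring
      have := hval (K+1+k) (t k) (htltT k) (by rw [hTt k, hcast])
      rwa [hTt k] at this
    -- the key distance estimate
    obtain ⟨ρ, hρdef⟩ : ∃ ρ : ℝ, ρ = |d| / (π * ((K:ℝ)+3)) := ⟨_, rfl⟩
    have hρ : 0 < ρ := by rw [hρdef]; positivity
    refine unbdd_var x (Set.Icc 0 T) t ht hts ρ hρ ?_
    intro k
    have hτ := one_div_pos.mpr (hσpos k)
    have hτ' := one_div_pos.mpr (hσpos (k+1))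
    have hττ' : 1/σ (k+1) ≤ 1/σ k := one_div_le_one_div_of_le (hσpos k) (hσmono k).le
    -- component bound
    have hcomp : |x (t (k+1)) 1 - x (t k) 1| ≤ dist (x (t (k+1))) (x (t k)) := by
      rw [← Real.dist_eq]
      exact dist_le_pi_dist (x (t (k+1))) (x (t k)) 1
    refine le_trans ?_ hcomp
    -- compute the difference
    have hdiff : |x (t (k+1)) 1 - x (t k) 1|
        = |d * (1/σ k + 1/σ (k+1)) + e * ((1/σ k)^2 + (1/σ (k+1))^2)| := by
      rw [hxv k, hxv (k+1)]
      have hpow : (-1:ℝ)^(K+1+(k+1)) = -(-1:ℝ)^(K+1+k) := by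
        rw [show K+1+(k+1) = (K+1+k)+1 by ring, pow_succ]
        ring
      rw [hpow]
      have : -(-1:ℝ)^(K+1+k) * (d * (1/σ (k+1)) + e * (1/σ (k+1))^2)
          - (-1:ℝ)^(K+1+k) * (d * (1/σ k) + e * (1/σ k)^2)
          = (-1:ℝ)^(K+1+k) * -(d * (1/σ k + 1/σ (k+1)) + e * ((1/σ k)^2 + (1/σ (k+1))^2)) := by
        ring
      rw [this, abs_mul, abs_neg, abs_pow, abs_neg, abs_one, one_pow, one_mul]
    rw [hdiff]
    -- lower bound on the difference
    have hlow : |d| * (1/σ k + 1/σ (k+1)) - |e| * ((1/σ k)^2 + (1/σ (k+1))^2)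
        ≤ |d * (1/σ k + 1/σ (k+1)) + e * ((1/σ k)^2 + (1/σ (k+1))^2)| := by
      have h1 := abs_sub_abs_le_abs_sub (d * (1/σ k + 1/σ (k+1)))
        (-(e * ((1/σ k)^2 + (1/σ (k+1))^2)))
      rw [abs_neg, sub_neg_eq_add] at h1
      rw [abs_mul, abs_mul] at h1
      rw [abs_of_pos (by positivity : (0:ℝ) < 1/σ k + 1/σ (k+1)),
        abs_of_pos (by positivity : (0:ℝ) < (1/σ k)^2 + (1/σ (k+1))^2)] at h1
      exact h1
    -- error term bound : |e| * (τ² + τ'²) ≤ |d| * τ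
    have herr : |e| * ((1/σ k)^2 + (1/σ (k+1))^2) ≤ |d| * (1/σ k) := by
      have h1 : (1/σ (k+1))^2 ≤ (1/σ k)^2 := pow_le_pow_left₀ hτ'.le hττ' 2
      have h2 : 2*|e| ≤ |d| * σ k := by
        have ha := (div_le_iff₀ hd').mp hK2
        have hb := mul_le_mul_of_nonneg_right (hσK k) hd'.le
        linarith
      have h3 : |e| * ((1/σ k)^2 + (1/σ (k+1))^2) ≤ 2*|e| * (1/σ k)^2 := by
        have := mul_le_mul_of_nonneg_left
          (by linarith : (1/σ k)^2 + (1/σ (k+1))^2 ≤ 2*(1/σ k)^2) (abs_nonneg e)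
        linarith
      have h4 : 2*|e| * (1/σ k)^2 ≤ |d| * σ k * (1/σ k)^2 :=
        mul_le_mul_of_nonneg_right h2 (sq_nonneg _)
      have h5 : |d| * σ k * (1/σ k)^2 = |d| * (1/σ k) := by
        field_simp
      linarith
    -- so the difference is at least |d| * τ'
    have hmain : |d| * (1/σ (k+1))
        ≤ |d * (1/σ k + 1/σ (k+1)) + e * ((1/σ k)^2 + (1/σ (k+1))^2)| := by
      have : |d| * (1/σ (k+1)) ≤ |d| * (1/σ k + 1/σ (k+1))
          - |e| * ((1/σ k)^2 + (1/σ (k+1))^2) := by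
        have : |d| * (1/σ k + 1/σ (k+1)) = |d| * (1/σ k) + |d| * (1/σ (k+1)) := by ring
        linarith [herr]
      linarith [hlow]
    refine le_trans ?_ hmain
    -- finally ρ/(k+1) ≤ |d| / σ (k+1)
    have hσub : σ (k+1) ≤ π * ((K:ℝ)+3) * ((k:ℝ)+1) := by
      simp only [hσdef]
      push_cast
      have h1 : (0:ℝ) ≤ k := Nat.cast_nonneg k
      have h2 : (0:ℝ) ≤ K := Nat.cast_nonneg K
      nlinarith [mul_nonneg (mul_nonneg hπ0.le h2) h1, mul_nonneg hπ0.le h1, hθ, hπ0]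
    rw [hρdef, div_div, mul_one_div]
    gcongr
    exact hσpos (k+1)
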